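/- For any alphabet A, any k ∈ ℕ, and any language L ⊆ A*, L belongs to SU_k(A) if and only if L is a union of languages having one of the two forms: A*w for some w with |w| = k, or {w} for some w with |w| ≤ k−1. -/

import Mathlib

/-- `SUk k` : finite Boolean combinations of the languages `A*w` with `|w| ≤ k`. -/
inductive SUk {A : Type*} (k : ℕ) : Set (List A) → Prop
  | base (w : List A) : w.length ≤ k → SUk k {u : List A | ∃ v : List A, u = v ++ w}
  | union {L₁ L₂ : Set (List A)} : SUk k L₁ → SUk k L₂ → SUk k (L₁ ∪ L₂)
  | inter {L₁ L₂ : Set (List A)} : SUk k L₁ → SUk k L₂ → SUk k (L₁ ∩ L₂)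
  | compl {L : Set (List A)} : SUk k L → SUk k Lᶜ

lemma suk_invariant {A : Type*} {k : ℕ} {L : Set (List A)} (h : SUk k L) :
    ∀ u u' : List A, (∀ w : List A, w.length ≤ k → (w <:+ u ↔ w <:+ u')) →
      (u ∈ L ↔ u' ∈ L) := by
  induction h with
  | base w hw =>
    intro u u' hs
    have : ∀ x : List A, (x ∈ {u : List A | ∃ v : List A, u = v ++ w}) ↔ w <:+ x := by
      intro x
      constructor
      · rintro ⟨v, rfl⟩; exact ⟨v, rfl⟩
      · rintro ⟨v, rfl⟩; exact ⟨v, rfl⟩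
    rw [this, this]; exact hs w hw
  | union h1 h2 ih1 ih2 =>
    intro u u' hs
    simp only [Set.mem_union, ih1 u u' hs, ih2 u u' hs]
  | inter h1 h2 ih1 ih2 =>
    intro u u' hs
    simp only [Set.mem_inter_iff, ih1 u u' hs, ih2 u u' hs]
  | compl h ih =>
    intro u u' hs
    simp only [Set.mem_compl_iff, ih u u' hs]

lemma suk_singleton {A : Type*} [Fintype A] {k : ℕ} (w : List A) (hw : w.length < k) :
    SUk k {w} := by
  have hbase : SUk k {u : List A | ∃ v : List A, u = v ++ w} := SUk.base w hw.le
  have hstep : ∀ a : A, SUk k {u : List A | ∃ v : List A, u = v ++ (a :: w)} :=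
    fun a => SUk.base (a :: w) (by simpa using hw)
  have hU : SUk k (⋃ a : A, {u : List A | ∃ v : List A, u = v ++ (a :: w)}) := by
    classical
    have : ∀ s : Finset A, SUk k (⋃ a ∈ s, {u : List A | ∃ v : List A, u = v ++ (a :: w)})
        ∨ s = ∅ := by
      intro s
      induction s using Finset.induction with
      | empty => exact Or.inr rfl
      | @insert a s hx ih =>
        left
        rcases ih with ih | rfl
        · rw [Finset.set_biUnion_insert]
          exact SUk.union (hstep a) ih
        · simpa using hstep a
    rcases this Finset.univ with h | h
    · simpa using h
    · -- A is empty
      have hA : IsEmpty A := by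
        rw [Finset.univ_eq_empty_iff] at h; exact h
      have : (⋃ a : A, {u : List A | ∃ v : List A, u = v ++ (a :: w)}) = (∅ : Set (List A)) := by
        simp
      rw [this]
      have : (∅ : Set (List A)) = {u : List A | ∃ v : List A, u = v ++ ([] : List A)}ᶜ := by
        ext x; simp
      rw [this]
      exact SUk.compl (SUk.base [] (Nat.zero_le k))
  have : ({w} : Set (List A)) =
      {u : List A | ∃ v : List A, u = v ++ w} ∩
        (⋃ a : A, {u : List A | ∃ v : List A, u = v ++ (a :: w)})ᶜ := by
    ext x
    simp only [Set.mem_singleton_iff, Set.mem_inter_iff, Set.mem_compl_iff, Set.mem_iUnion,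
      Set.mem_setOf_eq, not_exists]
    constructor
    · rintro rfl
      refine ⟨⟨[], rfl⟩, ?_⟩
      intro a v hv
      have := congrArg List.length hv
      simp at this; omega
    · rintro ⟨⟨v, rfl⟩, h2⟩
      cases v with
      | nil => rfl
      | cons b t =>
        exfalso
        rcases List.eq_nil_or_concat (b :: t) with h | ⟨t', a, h⟩
        · simp at h
        · exact h2 a t' (by rw [h, List.concat_eq_append]; simp)
  rw [this]
  exact SUk.inter hbase (SUk.compl hU)

/-- A language `L ⊆ A*` belongs to `SUk k` if and only if it is a union of languages
of one of the two forms: `A*w` for some `w` with `|w| = k`, or `{w}` for some `w`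
with `|w| ≤ k - 1`. -/
theorem suk_iff_union (A : Type*) [Fintype A] (k : ℕ) (L : Set (List A)) :
    SUk k L ↔
      ∃ 𝒮 : Set (Set (List A)),
        (∀ K ∈ 𝒮,
          (∃ w : List A, w.length = k ∧ K = {u : List A | ∃ v : List A, u = v ++ w}) ∨
          (∃ w : List A, w.length < k ∧ K = {w})) ∧
        L = ⋃₀ 𝒮 := by
  constructor
  · intro h
    refine ⟨{K | ((∃ w : List A, w.length = k ∧ K = {u : List A | ∃ v : List A, u = v ++ w}) ∨
        (∃ w : List A, w.length < k ∧ K = {w})) ∧ K ⊆ L}, fun K hK => hK.1, ?_⟩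
    apply Set.Subset.antisymm
    · intro u hu
      by_cases hlen : u.length < k
      · exact ⟨{u}, ⟨Or.inr ⟨u, hlen, rfl⟩, by simpa using hu⟩, rfl⟩
      · push_neg at hlen
        set w := u.drop (u.length - k) with hw
        have hwl : w.length = k := by simp [hw]; omega
        refine ⟨{x : List A | ∃ v : List A, x = v ++ w}, ⟨Or.inl ⟨w, hwl, rfl⟩, ?_⟩,
          ⟨u.take (u.length - k), by simp [hw]⟩⟩
        rintro x ⟨v, rfl⟩
        have hsuf : w <:+ u := List.drop_suffix _ _
        have key : ∀ w' : List A, w'.length ≤ k → (w' <:+ u ↔ w' <:+ v ++ w) := by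
          intro w' hw'
          constructor
          · intro h'
            exact (List.suffix_of_suffix_length_le h' hsuf (by omega)).trans ⟨v, rfl⟩
          · intro h'
            have : w' <:+ w :=
              List.suffix_of_suffix_length_le h' ⟨v, rfl⟩ (by omega)
            exact this.trans hsuf
        exact (suk_invariant h u (v ++ w) key).mp hu
    · rintro u ⟨K, ⟨_, hKL⟩, hu⟩
      exact hKL hu
  · rintro ⟨𝒮, h𝒮, rfl⟩
    classical
    have hfin : 𝒮.Finite := by
      apply Set.Finite.subset (((List.finite_length_le A k).image
        (fun w => {u : List A | ∃ v : List A, u = v ++ w})).union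
        ((List.finite_length_le A k).image (fun w => ({w} : Set (List A)))))
      intro K hK
      rcases h𝒮 K hK with ⟨w, hw, rfl⟩ | ⟨w, hw, rfl⟩
      · exact Or.inl ⟨w, by simp [hw], rfl⟩
      · exact Or.inr ⟨w, by simp; omega, rfl⟩
    have hempty : SUk k (∅ : Set (List A)) := by
      have : (∅ : Set (List A)) = {u : List A | ∃ v : List A, u = v ++ ([] : List A)}ᶜ := by
        ext x; simp
      rw [this]
      exact SUk.compl (SUk.base [] (Nat.zero_le k))
    have main : ∀ 𝒯 : Set (Set (List A)), 𝒯.Finite →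
        (∀ K ∈ 𝒯,
          (∃ w : List A, w.length = k ∧ K = {u : List A | ∃ v : List A, u = v ++ w}) ∨
          (∃ w : List A, w.length < k ∧ K = {w})) → SUk k (⋃₀ 𝒯) := by
      intro 𝒯 hfin
      refine Set.Finite.induction_on 𝒯 hfin (fun _ => by simpa using hempty) ?_
      intro K 𝒯' hK hfin' ih hall
      rw [Set.sUnion_insert]
      have hKs : SUk k K := by
        rcases hall K (Set.mem_insert _ _) with ⟨w, hw, rfl⟩ | ⟨w, hw, rfl⟩
        · exact SUk.base w hw.le
        · exact suk_singleton w hw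
      exact SUk.union hKs (ih fun K' hK' => hall K' (Set.mem_insert_of_mem _ hK'))
    exact main 𝒮 hfin h𝒮
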